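/- The Cartesian product K_4 □ P_2 is not a minor of the Cartesian product K_{2,3} □ P_2. -/

import Mathlib

/-- `H` is a minor of `G`: there is an assignment of pairwise disjoint, connected,
nonempty branch sets in `G` to the vertices of `H`, with an edge of `G` between the
branch sets of any two adjacent vertices of `H`. -/
def SimpleGraph.IsMinorOf {W V : Type*} (H : SimpleGraph W) (G : SimpleGraph V) : Prop :=
  ∃ φ : W → Set V,
    (∀ w, (G.induce (φ w)).Connected) ∧
    (Pairwise fun w w' => Disjoint (φ w) (φ w')) ∧
    ∀ ⦃w w'⦄, H.Adj w w' → ∃ a ∈ φ w, ∃ b ∈ φ w', G.Adj a b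

instance : DecidableRel (SimpleGraph.pathGraph 2).Adj := fun _ _ =>
  decidable_of_iff _ (SimpleGraph.pathGraph_adj).symm

instance {α} [DecidableEq α] : DecidableRel (SimpleGraph.completeGraph α).Adj := fun a b =>
  decidable_of_iff (a ≠ b) Iff.rfl

instance {α β} : DecidableRel (completeBipartiteGraph α β).Adj := fun a b =>
  decidable_of_iff (a.isLeft ∧ b.isRight ∨ a.isRight ∧ b.isLeft) Iff.rfl

instance {α β} (G : SimpleGraph α) (H : SimpleGraph β) [DecidableEq α] [DecidableEq β]
    [DecidableRel G.Adj] [DecidableRel H.Adj] : DecidableRel (G □ H).Adj := fun _ _ =>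
  decidable_of_iff _ (SimpleGraph.boxProd_adj).symm

lemma degK4P2 : ∀ w : Fin 4 × Fin 2,
    ((SimpleGraph.completeGraph (Fin 4)) □ (SimpleGraph.pathGraph 2)).degree w = 4 := by decide

/-- The Cartesian product `K_4 □ P_2` is not a minor of `K_{2,3} □ P_2`. -/
theorem k4p2_not_minor_k23p2 :
    ¬ ((SimpleGraph.completeGraph (Fin 4)) □ (SimpleGraph.pathGraph 2)).IsMinorOf
        ((completeBipartiteGraph (Fin 2) (Fin 3)) □ (SimpleGraph.pathGraph 2)) := by
  classical
  rintro ⟨φ, hconn, hdisj, hadj⟩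
  set Hh := (SimpleGraph.completeGraph (Fin 4)) □ (SimpleGraph.pathGraph 2) with hHh
  set Gg := (completeBipartiteGraph (Fin 2) (Fin 3)) □ (SimpleGraph.pathGraph 2) with hGg
  -- each branch set is nonempty
  have hne : ∀ w, (φ w).Nonempty := fun w =>
    Set.nonempty_coe_sort.mp (hconn w).nonempty
  set f : Fin 4 × Fin 2 → (Fin 2 ⊕ Fin 3) × Fin 2 := fun w => (hne w).choose with hf
  have hfmem : ∀ w, f w ∈ φ w := fun w => (hne w).choose_spec
  have finj : Function.Injective f := by
    intro w w' hww'
    by_contra hne'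
    exact Set.disjoint_left.mp (hdisj hne') (hfmem w) (hww' ▸ hfmem w')
  -- finset versions of the branch sets
  set ψ : Fin 4 × Fin 2 → Finset ((Fin 2 ⊕ Fin 3) × Fin 2) :=
    fun w => (φ w).toFinite.toFinset with hψ
  have hmemψ : ∀ w x, x ∈ ψ w ↔ x ∈ φ w := fun w x => Set.Finite.mem_toFinset _
  -- map each vertex to the branch set containing it (if any)
  set gb : (Fin 2 ⊕ Fin 3) × Fin 2 → Fin 4 × Fin 2 := fun b =>
    if h : ∃ u, b ∈ φ u then h.choose else (0, 0) with hgb'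
  have hgb : ∀ u b, b ∈ φ u → gb b = u := by
    intro u b hb
    have h : ∃ u, b ∈ φ u := ⟨u, hb⟩
    simp only [hgb', dif_pos h]
    by_contra hne'
    exact Set.disjoint_left.mp (hdisj hne') h.choose_spec hb
  -- if a branch set is a singleton, its vertex has degree at least 4
  have key : ∀ w, φ w = {f w} → 4 ≤ Gg.degree (f w) := by
    intro w hw
    calc 4 = Hh.degree w := (degK4P2 w).symm
      _ = (Hh.neighborFinset w).card := rfl
      _ ≤ (Gg.neighborFinset (f w)).card := by
          apply Finset.card_le_card_of_surjOn gb
          intro w' hw'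
          simp only [Finset.coe_sort_coe, Finset.mem_coe,
            SimpleGraph.mem_neighborFinset] at hw'
          obtain ⟨a, ha, b, hb, hab⟩ := hadj hw'
          have haf : a = f w := by rw [hw] at ha; simpa using ha
          refine ⟨b, ?_, hgb w' b hb⟩
          simp only [Finset.coe_sort_coe, Finset.mem_coe,
            SimpleGraph.mem_neighborFinset]
          exact haf ▸ hab
      _ = Gg.degree (f w) := rfl
  -- the set of vertices of degree ≥ 4 has only 4 elements
  set X : Finset ((Fin 2 ⊕ Fin 3) × Fin 2) :=
    Finset.univ.filter (fun v => 4 ≤ Gg.degree v) with hX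
  have hXcard : X.card = 4 := by decide
  -- the singleton branch sets
  have hsingle : ∀ w ∈ Finset.univ.filter (fun w => (ψ w).card = 1), φ w = {f w} := by
    intro w hw
    rw [Finset.mem_filter] at hw
    obtain ⟨a, ha⟩ := Finset.card_eq_one.mp hw.2
    have hfa : f w = a := by
      have := (hmemψ w (f w)).mpr (hfmem w)
      rw [ha, Finset.mem_singleton] at this; exact this
    ext x
    rw [← hmemψ w x, ha, Finset.mem_singleton, Set.mem_singleton_iff, hfa]
  have hScard : (Finset.univ.filter (fun w => (ψ w).card = 1)).card ≤ 4 := by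
    have hle : (Finset.univ.filter (fun w => (ψ w).card = 1)).card ≤ X.card := by
      apply Finset.card_le_card_of_injOn f
      · intro w hw
        rw [hX, Finset.mem_coe, Finset.mem_filter]
        exact ⟨Finset.mem_univ _, key w (hsingle w hw)⟩
      · exact finj.injOn
    omega
  -- counting: total size of branch sets is at most 10
  have hdisjψ : ∀ w ∈ (Finset.univ : Finset (Fin 4 × Fin 2)), ∀ w' ∈ Finset.univ,
      w ≠ w' → Disjoint (ψ w) (ψ w') := by
    intro w _ w' _ hww'
    rw [Finset.disjoint_left]
    intro x hx hx'
    exact Set.disjoint_left.mp (hdisj hww') ((hmemψ w x).mp hx) ((hmemψ w' x).mp hx')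
  have hsum10 : ∑ w, (ψ w).card ≤ 10 := by
    rw [← Finset.card_biUnion hdisjψ]
    calc (Finset.univ.biUnion ψ).card ≤ Fintype.card ((Fin 2 ⊕ Fin 3) × Fin 2) :=
          Finset.card_le_univ _
      _ = 10 := by decide
  -- lower bound on the total size
  have hone : ∀ w, 1 ≤ (ψ w).card := by
    intro w
    rw [Nat.one_le_iff_ne_zero, ← Nat.pos_iff_ne_zero, Finset.card_pos]
    exact ⟨f w, (hmemψ w (f w)).mpr (hfmem w)⟩
  have hsplit : (∑ w ∈ Finset.univ.filter (fun w => (ψ w).card = 1), (ψ w).card)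
      + ∑ w ∈ Finset.univ.filter (fun w => ¬(ψ w).card = 1), (ψ w).card
      = ∑ w, (ψ w).card :=
    Finset.sum_filter_add_sum_filter_not _ _ _
  have hcards := Finset.card_filter_add_card_filter_not
    (s := (Finset.univ : Finset (Fin 4 × Fin 2))) (p := fun w => (ψ w).card = 1)
  have hWcard : (Finset.univ : Finset (Fin 4 × Fin 2)).card = 8 := by decide
  have hsum1 : ∑ w ∈ Finset.univ.filter (fun w => (ψ w).card = 1), (ψ w).card
      = (Finset.univ.filter (fun w => (ψ w).card = 1)).card := by
    rw [Finset.sum_congr rfl (fun w hw => (Finset.mem_filter.mp hw).2)]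
    simp
  have hsum2 : (Finset.univ.filter (fun w => ¬ (ψ w).card = 1)).card * 2
      ≤ ∑ w ∈ Finset.univ.filter (fun w => ¬ (ψ w).card = 1), (ψ w).card := by
    have h := Finset.card_nsmul_le_sum
      (Finset.univ.filter (fun w => ¬ (ψ w).card = 1))
      (fun w => (ψ w).card) 2 (fun w hw => by
        show 2 ≤ (ψ w).card
        have h1 : (ψ w).card ≠ 1 := by simpa using (Finset.mem_filter.mp hw).2
        have h2 := hone w
        omega)
    simpa [smul_eq_mul] using h
  omega
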